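/- Let ψ : ℝ³ → ℝ satisfy ψ(Z(θ)·v) = ψ(v) for all θ ∈ ℝ and v ∈ ℝ³. Let x ∈ ℝ³ with x ≠ 0, h = ‖x‖, and Q ∈ SO(3). Choose α, β ∈ ℝ with Z(α)·Y(β)·n = x/‖x‖ and α′, β′ ∈ ℝ with Z(α′)·Y(β′)·n = Q·x/‖x‖. Then for every v ∈ ℝ³: ψ((Z(α′)·Y(β′)·Z(2πh))⁻¹ · (Q·v)) = ψ((Z(α)·Y(β)·Z(2πh))⁻¹ · v). -/
import Mathlib

open Matrix


/-- The 3×3 rotation matrix about the z-axis by angle `θ`. -/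
noncomputable def Zr (θ : ℝ) : Matrix (Fin 3) (Fin 3) ℝ :=
  !![Real.cos θ, -Real.sin θ, 0; Real.sin θ, Real.cos θ, 0; 0, 0, 1]

/-- The 3×3 rotation matrix about the y-axis by angle `β`. -/
noncomputable def Yr (β : ℝ) : Matrix (Fin 3) (Fin 3) ℝ :=
  !![Real.cos β, 0, Real.sin β; 0, 1, 0; -Real.sin β, 0, Real.cos β]

/-- The North Pole `n = (0,0,1)ᵀ`. -/
def npole : Fin 3 → ℝ := ![0, 0, 1]

/-- The Euclidean norm of a vector in `ℝ³`. -/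
noncomputable def enorm3 (v : Fin 3 → ℝ) : ℝ :=
  Real.sqrt (v 0 ^ 2 + v 1 ^ 2 + v 2 ^ 2)

lemma zr_mul_zr (a b : ℝ) : Zr a * Zr b = Zr (a + b) := by
  ext i j
  fin_cases i <;> fin_cases j <;>
    simp [Zr, Matrix.mul_apply, Fin.sum_univ_three, Real.cos_add, Real.sin_add] <;> ring

lemma zr_zero : Zr 0 = 1 := by
  simp [Zr, Matrix.one_fin_three]

lemma yr_mul_yr (a b : ℝ) : Yr a * Yr b = Yr (a + b) := by
  ext i j
  fin_cases i <;> fin_cases j <;>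
    simp [Yr, Matrix.mul_apply, Fin.sum_univ_three, Real.cos_add, Real.sin_add] <;> ring

lemma yr_zero : Yr 0 = 1 := by
  simp [Yr, Matrix.one_fin_three]

lemma zr_inv (θ : ℝ) : (Zr θ)⁻¹ = Zr (-θ) :=
  Matrix.inv_eq_right_inv (by rw [zr_mul_zr, add_neg_cancel, zr_zero])

lemma yr_inv (θ : ℝ) : (Yr θ)⁻¹ = Yr (-θ) :=
  Matrix.inv_eq_right_inv (by rw [yr_mul_yr, add_neg_cancel, yr_zero])

lemma zr_transpose (θ : ℝ) : (Zr θ)ᵀ = Zr (-θ) := by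
  ext i j
  fin_cases i <;> fin_cases j <;> simp [Zr]

lemma yr_transpose (θ : ℝ) : (Yr θ)ᵀ = Yr (-θ) := by
  ext i j
  fin_cases i <;> fin_cases j <;> simp [Yr]

lemma zr_det (θ : ℝ) : (Zr θ).det = 1 := by
  simp [Zr, Matrix.det_fin_three]
  nlinarith [Real.sin_sq_add_cos_sq θ]

lemma yr_det (θ : ℝ) : (Yr θ).det = 1 := by
  simp [Yr, Matrix.det_fin_three]
  nlinarith [Real.sin_sq_add_cos_sq θ]

/-- A special orthogonal matrix fixing the north pole is a z-rotation. -/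
lemma fix_npole_eq_zr (A : Matrix (Fin 3) (Fin 3) ℝ)
    (horth : Aᵀ * A = 1) (hdet : A.det = 1) (hn : A.mulVec npole = npole) :
    ∃ θ, A = Zr θ := by
  have h02 : A 0 2 = 0 := by
    have := congrFun hn 0
    simpa [Matrix.mulVec, dotProduct, npole, Fin.sum_univ_three] using this
  have h12 : A 1 2 = 0 := by
    have := congrFun hn 1
    simpa [Matrix.mulVec, dotProduct, npole, Fin.sum_univ_three] using this
  have h22 : A 2 2 = 1 := by
    have := congrFun hn 2
    simpa [Matrix.mulVec, dotProduct, npole, Fin.sum_univ_three] using this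
  have h20 : A 2 0 = 0 := by
    have := congrFun (congrFun horth 2) 0
    simp [Matrix.mul_apply, Fin.sum_univ_three, Matrix.one_apply, h02, h12, h22] at this
    linarith
  have h21 : A 2 1 = 0 := by
    have := congrFun (congrFun horth 2) 1
    simp [Matrix.mul_apply, Fin.sum_univ_three, Matrix.one_apply, h02, h12, h22] at this
    linarith
  set a := A 0 0 with ha
  set b := A 0 1 with hb
  set c := A 1 0 with hc
  set d := A 1 1 with hd
  have e1 : a ^ 2 + c ^ 2 = 1 := by
    have := congrFun (congrFun horth 0) 0
    simp [Matrix.mul_apply, Fin.sum_univ_three, Matrix.one_apply, h20] at this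
    nlinarith [this]
  have e2 : a * b + c * d = 0 := by
    have := congrFun (congrFun horth 0) 1
    simp [Matrix.mul_apply, Fin.sum_univ_three, Matrix.one_apply, h20, h21] at this
    linarith
  have e3 : a * d - b * c = 1 := by
    have := hdet
    rw [Matrix.det_fin_three] at this
    rw [h02, h12, h20, h21, h22] at this
    ring_nf at this ⊢
    linarith [this]
  have hbc : b = -c := by linear_combination a * e2 - b * e1 - c * e3
  have hda : d = a := by linear_combination c * e2 + a * e3 - d * e1
  have ha1 : -1 ≤ a ∧ a ≤ 1 := by constructor <;> nlinarith
  have hθ : ∃ θ, Real.cos θ = a ∧ Real.sin θ = c := by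
    rcases le_or_gt 0 c with hcpos | hcneg
    · refine ⟨Real.arccos a, Real.cos_arccos ha1.1 ha1.2, ?_⟩
      rw [Real.sin_arccos]
      have : 1 - a ^ 2 = c ^ 2 := by linarith
      rw [this, Real.sqrt_sq hcpos]
    · refine ⟨-Real.arccos a, by rw [Real.cos_neg, Real.cos_arccos ha1.1 ha1.2], ?_⟩
      rw [Real.sin_neg, Real.sin_arccos]
      have : 1 - a ^ 2 = c ^ 2 := by linarith
      rw [this, Real.sqrt_sq_eq_abs, abs_of_neg hcneg, neg_neg]
  obtain ⟨θ, hcos, hsin⟩ := hθ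
  refine ⟨θ, ?_⟩
  ext i j
  fin_cases i <;> fin_cases j <;>
    simp [Zr, hcos, hsin, ← ha, ← hb, ← hc, ← hd, h02, h12, h20, h21, h22, hbc, hda]

/-- **The per-point identity underlying the rotation invariance of the sparse correlation.**
If `ψ` is constant on the left coset of z-axis rotations, `x ≠ 0`, `h = ‖x‖`, `Q ∈ SO(3)`,
and `(α, β)` resp. `(α′, β′)` are spherical angles of `x/‖x‖` resp. `Q·x/‖x‖`, then
`ψ((Z(α′)Y(β′)Z(2πh))⁻¹ · (Q·v)) = ψ((Z(α)Y(β)Z(2πh))⁻¹ · v)` for every `v`. -/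
theorem sparse_correlation_pointwise_identity
    (ψ : (Fin 3 → ℝ) → ℝ)
    (hψ : ∀ (θ : ℝ) (v : Fin 3 → ℝ), ψ ((Zr θ).mulVec v) = ψ v)
    (x : Fin 3 → ℝ) (hx : x ≠ 0)
    (Q : Matrix (Fin 3) (Fin 3) ℝ) (hQ : Q ∈ Matrix.specialOrthogonalGroup (Fin 3) ℝ)
    (α β α' β' : ℝ)
    (hαβ : (Zr α * Yr β).mulVec npole = (enorm3 x)⁻¹ • x)
    (hαβ' : (Zr α' * Yr β').mulVec npole = (enorm3 x)⁻¹ • Q.mulVec x)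
    (v : Fin 3 → ℝ) :
    ψ ((Zr α' * Yr β' * Zr (2 * Real.pi * enorm3 x))⁻¹.mulVec (Q.mulVec v))
      = ψ ((Zr α * Yr β * Zr (2 * Real.pi * enorm3 x))⁻¹.mulVec v) := by
  rw [Matrix.mem_specialOrthogonalGroup_iff] at hQ
  obtain ⟨hQo, hQd⟩ := hQ
  rw [Matrix.mem_orthogonalGroup_iff'] at hQo
  have hQo : Qᵀ * Q = 1 := by simpa using hQo
  set cc : ℝ := 2 * Real.pi * enorm3 x with hcc
  set R := Zr α * Yr β with hR
  set R' := Zr α' * Yr β' with hR'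
  set S := Yr (-β) * Zr (-α) with hS
  set S' := Yr (-β') * Zr (-α') with hS'
  have hSR : S * R = 1 := by
    calc S * R = Yr (-β) * ((Zr (-α) * Zr α) * Yr β) := by
          rw [hS, hR]; noncomm_ring
      _ = 1 := by rw [zr_mul_zr, neg_add_cancel, zr_zero, one_mul, yr_mul_yr,
          neg_add_cancel, yr_zero]
  have hS'R' : S' * R' = 1 := by
    calc S' * R' = Yr (-β') * ((Zr (-α') * Zr α') * Yr β') := by
          rw [hS', hR']; noncomm_ring
      _ = 1 := by rw [zr_mul_zr, neg_add_cancel, zr_zero, one_mul, yr_mul_yr,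
          neg_add_cancel, yr_zero]
  have hRS : R * S = 1 := mul_eq_one_comm.mp hSR
  have hR'S' : R' * S' = 1 := mul_eq_one_comm.mp hS'R'
  have hRT : Rᵀ = S := by rw [hR, hS, Matrix.transpose_mul, zr_transpose, yr_transpose]
  have hS'T : S'ᵀ = R' := by
    rw [hS', hR', Matrix.transpose_mul, zr_transpose, yr_transpose, neg_neg, neg_neg]
  set M := S' * Q * R with hM
  have hMn : M.mulVec npole = npole := by
    rw [hM, ← Matrix.mulVec_mulVec, ← Matrix.mulVec_mulVec, hαβ, Matrix.mulVec_smul,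
      ← hαβ', Matrix.mulVec_mulVec, hS'R', Matrix.one_mulVec]
  have hMorth : Mᵀ * M = 1 := by
    have : Mᵀ * M = Rᵀ * (Qᵀ * ((S'ᵀ * S') * Q)) * R := by
      rw [hM]; simp [Matrix.transpose_mul, Matrix.mul_assoc]
    rw [this, hS'T, hR'S', one_mul, hQo, mul_one, hRT, hSR]
  have hMdet : M.det = 1 := by
    simp [hM, hS', hR, Matrix.det_mul, zr_det, yr_det, hQd]
  obtain ⟨θ, hMθ⟩ := fix_npole_eq_zr M hMorth hMdet hMn
  have hinv : (R' * Zr cc)⁻¹ = Zr (-cc) * S' := by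
    rw [Matrix.mul_inv_rev, zr_inv, hR', Matrix.mul_inv_rev, zr_inv, yr_inv, hS']
  have hinv2 : (R * Zr cc)⁻¹ = Zr (-cc) * S := by
    rw [Matrix.mul_inv_rev, zr_inv, hR, Matrix.mul_inv_rev, zr_inv, yr_inv, hS]
  have hS'Q : S' * Q = Zr θ * S := by
    have : S' * Q = S' * Q * (R * S) := by rw [hRS, mul_one]
    rw [this, ← Matrix.mul_assoc, ← hM, hMθ]
  have hzz : Zr (-cc) * Zr θ = Zr θ * Zr (-cc) := by
    rw [zr_mul_zr, zr_mul_zr, add_comm]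
  have key : (R' * Zr cc)⁻¹ * Q = Zr θ * ((R * Zr cc)⁻¹) := by
    rw [hinv, hinv2]
    calc Zr (-cc) * S' * Q = Zr (-cc) * (S' * Q) := by rw [Matrix.mul_assoc]
      _ = Zr (-cc) * Zr θ * S := by rw [hS'Q, Matrix.mul_assoc]
      _ = Zr θ * (Zr (-cc) * S) := by rw [hzz, Matrix.mul_assoc]
  calc ψ ((R' * Zr cc)⁻¹.mulVec (Q.mulVec v))
      = ψ (((R' * Zr cc)⁻¹ * Q).mulVec v) := by rw [Matrix.mulVec_mulVec]
    _ = ψ ((Zr θ * (R * Zr cc)⁻¹).mulVec v) := by rw [key]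
    _ = ψ ((Zr θ).mulVec ((R * Zr cc)⁻¹.mulVec v)) := by rw [Matrix.mulVec_mulVec]
    _ = ψ ((R * Zr cc)⁻¹.mulVec v) := hψ θ _
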